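/- Let G be a finite group and 0 → M → P → Q → 0 an exact sequence of finitely generated G-modules in which P is a permutation module (a free ℤ-module with a ℤ-basis permuted by G). Then the connecting homomorphism induces an isomorphism Ш¹_ω(G, Q) ≅ Ш²_ω(G, M), where Шⁱ_ω(G, −) := ⋂_{g∈G} Ker[Hⁱ(G, −) → Hⁱ(⟨g⟩, −)]. -/

import Mathlib

open groupCohomology

section Helper

variable {k G G' : Type} [CommRing k] [Group G] [Group G']

/-- Restriction of a representation along a group homomorphism. -/
noncomputable def resRep (φ : G' →* G) (A : Rep.{0} k G) : Rep.{0} k G' := Rep.of (A.ρ.comp φ)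

/-- The 1-coboundaries, as a submodule of the 1-cocycles (old Mathlib `oneCoboundaries`). -/
def oneCoboundaries (A : Rep.{0} k G) : Submodule k (cocycles₁ A) :=
  (coboundaries₁ A).comap (cocycles₁ A).subtype

/-- The 2-coboundaries, as a submodule of the 2-cocycles (old Mathlib `twoCoboundaries`). -/
def twoCoboundaries (A : Rep.{0} k G) : Submodule k (cocycles₂ A) :=
  (coboundaries₂ A).comap (cocycles₂ A).subtype

/-- Old Mathlib `oldH1`: the quotient `Z¹ / B¹`. -/
abbrev oldH1 (A : Rep.{0} k G) := cocycles₁ A ⧸ oneCoboundaries A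

/-- Old Mathlib `oldH2`: the quotient `Z² / B²`. -/
abbrev oldH2 (A : Rep.{0} k G) := cocycles₂ A ⧸ twoCoboundaries A

theorem mem_oneCoboundaries_iff {A : Rep.{0} k G} (f : cocycles₁ A) :
    f ∈ oneCoboundaries A ↔ ∃ x : A, ∀ g : G, A.ρ g x - x = f g := by
  simp only [oneCoboundaries, coboundaries₁, Submodule.mem_comap, LinearMap.mem_range,
    funext_iff]
  rfl

theorem mem_twoCoboundaries_iff {A : Rep.{0} k G} (f : cocycles₂ A) :
    f ∈ twoCoboundaries A ↔ ∃ x : G → A, ∀ g h : G,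
      A.ρ g (x h) - x (g * h) + x g = f (g, h) := by
  simp only [twoCoboundaries, coboundaries₂, Submodule.mem_comap, LinearMap.mem_range,
    funext_iff, Prod.forall]
  rfl

/-- Restriction of 1-cocycles along a group homomorphism. -/
noncomputable def resOneCocycles (φ : G' →* G) (A : Rep.{0} k G) :
    cocycles₁ A →ₗ[k] cocycles₁ (resRep φ A) where
  toFun f := ⟨fun g => f.1 (φ g), by
      refine (mem_cocycles₁_iff (A := resRep φ A) _).2 ?_
      intro g h
      have := (mem_cocycles₁_iff (A := A) f.1).1 f.2 (φ g) (φ h)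
      simp only [map_mul]
      exact this⟩
  map_add' f g := rfl
  map_smul' r f := rfl

/-- The restriction map on first group cohomology along a group homomorphism. -/
noncomputable def resH1 (φ : G' →* G) (A : Rep.{0} k G) :
    oldH1 A →ₗ[k] oldH1 (resRep φ A) :=
  Submodule.mapQ _ _ (resOneCocycles φ A) (by
    intro f hf
    rw [Submodule.mem_comap, mem_oneCoboundaries_iff]
    rw [mem_oneCoboundaries_iff] at hf
    obtain ⟨x, hx⟩ := hf
    refine ⟨x, fun g => ?_⟩
    have := hx (φ g)
    exact this)

/-- `Ш¹_ω(G, A)`: classes in `H¹(G, A)` restricting to `0` on every cyclic subgroup. -/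
noncomputable def Sha1 (A : Rep.{0} k G) : Submodule k (oldH1 A) :=
  ⨅ g : G, LinearMap.ker (resH1 (Subgroup.zpowers g).subtype A)

/-- Restriction of 2-cocycles along a group homomorphism. -/
noncomputable def resTwoCocycles (φ : G' →* G) (A : Rep.{0} k G) :
    cocycles₂ A →ₗ[k] cocycles₂ (resRep φ A) where
  toFun f := ⟨fun p => f.1 (φ p.1, φ p.2), by
      refine (mem_cocycles₂_iff (A := resRep φ A) _).2 ?_
      intro g h j
      have := (mem_cocycles₂_iff (A := A) f.1).1 f.2 (φ g) (φ h) (φ j)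
      simp only [map_mul]
      exact this⟩
  map_add' f g := rfl
  map_smul' r f := rfl

/-- The restriction map on second group cohomology along a group homomorphism. -/
noncomputable def resH2 (φ : G' →* G) (A : Rep.{0} k G) :
    oldH2 A →ₗ[k] oldH2 (resRep φ A) :=
  Submodule.mapQ _ _ (resTwoCocycles φ A) (by
    intro f hf
    rw [Submodule.mem_comap, mem_twoCoboundaries_iff]
    rw [mem_twoCoboundaries_iff] at hf
    obtain ⟨x, hx⟩ := hf
    refine ⟨fun g' => x (φ g'), fun g h => ?_⟩
    have := hx (φ g) (φ h)
    simp only [map_mul]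
    exact this)

/-- `Ш²_ω(G, A)`: classes in `H²(G, A)` restricting to `0` on every cyclic subgroup. -/
noncomputable def Sha2 (A : Rep.{0} k G) : Submodule k (oldH2 A) :=
  ⨅ g : G, LinearMap.ker (resH2 (Subgroup.zpowers g).subtype A)

end Helper


section PermVanish

/-- The permutation representation on `β →₀ ℤ`. -/
noncomputable def permRep (H β : Type) [Group H] [MulAction H β] :
    Representation ℤ H (β →₀ ℤ) where
  toFun g := Finsupp.lmapDomain ℤ ℤ (g • ·)
  map_one' := by
    show Finsupp.lmapDomain ℤ ℤ (fun b : β => (1 : H) • b) = LinearMap.id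
    have : (fun b : β => (1 : H) • b) = id := funext (one_smul H)
    rw [this, Finsupp.lmapDomain_id]
  map_mul' g h := by
    show Finsupp.lmapDomain ℤ ℤ (fun b : β => (g * h) • b)
      = Finsupp.lmapDomain ℤ ℤ (g • ·) * Finsupp.lmapDomain ℤ ℤ (h • ·)
    have : (fun b : β => (g * h) • b) = (g • ·) ∘ (h • ·) := funext fun b => mul_smul g h b
    rw [this, Finsupp.lmapDomain_comp]
    rfl

lemma permRep_apply {H β : Type} [Group H] [MulAction H β] (g : H) (x : β →₀ ℤ) (b : β) :
    permRep H β g x b = x (g⁻¹ • b) := by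
  show Finsupp.mapDomain (g • ·) x b = x (g⁻¹ • b)
  conv_lhs => rw [← smul_inv_smul g b]
  exact Finsupp.mapDomain_apply (MulAction.injective g) x (g⁻¹ • b)

variable {β : Type} {H : Type} [Group H] [MulAction H β]

/-- orbit representative function: constant on orbits, in the orbit. -/
noncomputable def orbRep (H : Type) [Group H] [MulAction H β] (b : β) : β :=
  (Quotient.mk (MulAction.orbitRel H β) b).out

lemma orbRep_mem (b : β) : ∃ g : H, g • b = orbRep H b := by
  have h := Quotient.mk_out (s := MulAction.orbitRel H β) b
  rw [MulAction.orbitRel_apply, MulAction.mem_orbit_iff] at h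
  exact h

lemma orbRep_smul (g : H) (b : β) : orbRep H (g • b) = orbRep H b := by
  unfold orbRep
  congr 1
  exact Quotient.sound ((MulAction.orbitRel_apply).2 (MulAction.mem_orbit b g))

/-- H¹ of a finite group with coefficients in an integral permutation module vanishes. -/
lemma perm_h1 [Finite H] [Fintype β] (f : H → (β →₀ ℤ))
    (hf : ∀ g h : H, ∀ b : β, f (g * h) b = f h (g⁻¹ • b) + f g b) :
    ∃ z : β →₀ ℤ, ∀ (g : H) (b : β), f g b = z (g⁻¹ • b) - z b := by
  classical
  cases nonempty_fintype H
  set N : ℤ := (Fintype.card H : ℤ) with hN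
  have hN0 : N ≠ 0 := by
    simp [hN, Fintype.card_ne_zero]
  set x : β → ℤ := fun b => ∑ g : H, f g b with hx
  have key : ∀ (g : H) (b : β), N * f g b = x b - x (g⁻¹ • b) := by
    intro g b
    have h1 : ∑ h : H, f (g * h) b = x b := by
      rw [hx]
      exact Fintype.sum_equiv (Equiv.mulLeft g) _ _ (fun h => rfl)
    rw [Finset.sum_congr rfl (fun h _ => hf g h b)] at h1
    rw [Finset.sum_add_distrib] at h1
    simp only [Finset.sum_const, Finset.card_univ, nsmul_eq_mul] at h1
    rw [hx]
    push_cast at h1 ⊢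
    linarith
  have div : ∀ b : β, ∃ d : ℤ, x b - x (orbRep H b) = N * d := by
    intro b
    obtain ⟨g, hg⟩ := orbRep_mem (H := H) b
    refine ⟨f g⁻¹ b, ?_⟩
    have := key g⁻¹ b
    rw [inv_inv, hg] at this
    linarith
  choose d hd using div
  refine ⟨Finsupp.equivFunOnFinite.symm (fun b => - d b), fun g b => ?_⟩
  have h1 : ∀ b, (Finsupp.equivFunOnFinite.symm (fun b => - d b) : β →₀ ℤ) b = - d b :=
    fun b => rfl
  rw [h1, h1]
  have horb : orbRep H (g⁻¹ • b) = orbRep H b := orbRep_smul g⁻¹ b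
  have := hd b
  have h2 := hd (g⁻¹ • b)
  rw [horb] at h2
  have hk := key g b
  have : N * f g b = N * (- d (g⁻¹ • b) - - d b) := by
    rw [hk]; ring_nf; linarith
  exact mul_left_cancel₀ hN0 this

/-- H¹ of a finite group with rational permutation coefficients vanishes. -/
lemma perm_h1_rat [Finite H] (f : H → (β → ℚ))
    (hf : ∀ g h : H, ∀ b : β, f (g * h) b = f h (g⁻¹ • b) + f g b) :
    ∃ w : β → ℚ, ∀ (g : H) (b : β), f g b = w (g⁻¹ • b) - w b := by
  classical
  cases nonempty_fintype H
  set N : ℚ := (Fintype.card H : ℚ) with hN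
  have hN0 : N ≠ 0 := by simp [hN, Fintype.card_ne_zero]
  set x : β → ℚ := fun b => ∑ g : H, f g b with hx
  have key : ∀ (g : H) (b : β), N * f g b = x b - x (g⁻¹ • b) := by
    intro g b
    have h1 : ∑ h : H, f (g * h) b = x b := by
      rw [hx]
      exact Fintype.sum_equiv (Equiv.mulLeft g) _ _ (fun h => rfl)
    rw [Finset.sum_congr rfl (fun h _ => hf g h b)] at h1
    rw [Finset.sum_add_distrib] at h1
    simp only [Finset.sum_const, Finset.card_univ, nsmul_eq_mul] at h1
    rw [hx]
    push_cast at h1 ⊢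
    linarith
  refine ⟨fun b => - x b / N, fun g b => ?_⟩
  show f g b = - x (g⁻¹ • b) / N - - x b / N
  have h2 : - x (g⁻¹ • b) / N - - x b / N = (x b - x (g⁻¹ • b)) / N := by ring
  rw [h2, ← key g b, mul_div_cancel_left₀ _ hN0]

/-- Explicit injectivity half of Shapiro's lemma in degree 1 with trivial coefficients. -/
lemma shapiro_inj {A : Type} [AddCommGroup A] (F : H → β → A)
    (hF : ∀ g h : H, ∀ b : β, F (g * h) b = F g b + F h (g⁻¹ • b))
    (hstab : ∀ (g : H) (b : β), g • b = b → F g b = 0) :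
    ∃ v : β → A, ∀ (g : H) (b : β), F g b = v (g⁻¹ • b) - v b := by
  classical
  have welldef : ∀ (g h : H) (b : β), g⁻¹ • b = h⁻¹ • b → F g b = F h b := by
    intro g h b hgh
    have h1 : F (h * (h⁻¹ * g)) b = F h b + F (h⁻¹ * g) (h⁻¹ • b) := hF h (h⁻¹ * g) b
    rw [mul_inv_cancel_left] at h1
    have hfix : (h⁻¹ * g) • (h⁻¹ • b) = h⁻¹ • b := by
      have : (h⁻¹ * g) • (h⁻¹ • b) = h⁻¹ • (g • (h⁻¹ • b)) := by
        rw [mul_smul]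
      rw [this]
      have : g • (h⁻¹ • b) = b := by
        rw [← hgh]; rw [smul_inv_smul]
      rw [this]
    rw [h1, hstab _ _ hfix, add_zero]
  choose τ hτ using fun b : β => orbRep_mem (H := H) b
  refine ⟨fun b => F (τ b) (orbRep H b), fun g b => ?_⟩
  have hb0 : orbRep H (g⁻¹ • b) = orbRep H b := orbRep_smul g⁻¹ b
  have hτb : (τ b)⁻¹ • orbRep H b = b := by rw [← hτ b, inv_smul_smul]
  have hτgb : (τ (g⁻¹ • b))⁻¹ • orbRep H b = g⁻¹ • b := by
    rw [← hb0, ← hτ (g⁻¹ • b), inv_smul_smul]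
  have h1 : F (τ b * g) (orbRep H b) = F (τ b) (orbRep H b) + F g b := by
    have := hF (τ b) g (orbRep H b)
    rw [hτb] at this
    exact this
  have h2 : F (τ b * g) (orbRep H b) = F (τ (g⁻¹ • b)) (orbRep H b) := by
    apply welldef
    rw [mul_inv_rev, mul_smul, hτb, hτgb]
  show F g b = F (τ (g⁻¹ • b)) (orbRep H (g⁻¹ • b)) - F (τ b) (orbRep H b)
  rw [hb0, ← h2, h1]
  abel

/-- `Ш²_ω` of an integral permutation module vanishes (cocycle-level statement). -/
lemma perm_sha2 [Finite H] [Fintype β] (c : H × H → (β →₀ ℤ))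
    (hc : ∀ g h j : H, ∀ b : β,
      c (g * h, j) b + c (g, h) b = c (h, j) (g⁻¹ • b) + c (g, h * j) b)
    (hres : ∀ g : H, ∃ u : Subgroup.zpowers g → (β →₀ ℤ),
      ∀ s t : Subgroup.zpowers g, ∀ b : β,
        c ((s : H), (t : H)) b = u t ((s : H)⁻¹ • b) - u (s * t) b + u s b) :
    ∃ u : H → (β →₀ ℤ), ∀ g h : H, ∀ b : β,
      c (g, h) b = u h (g⁻¹ • b) - u (g * h) b + u g b := by
  classical
  cases nonempty_fintype H
  set N : ℤ := (Fintype.card H : ℤ) with hNdef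
  have hN0 : N ≠ 0 := by simp [hNdef, Fintype.card_ne_zero]
  have hN0' : (N : ℚ) ≠ 0 := by exact_mod_cast hN0
  set B : H → β → ℤ := fun g b => ∑ h : H, c (g, h) b with hB
  have hBkey : ∀ g h : H, ∀ b : β,
      B h (g⁻¹ • b) - B (g * h) b + B g b = N * c (g, h) b := by
    intro g h b
    have h1 : ∑ j : H, (c (g * h, j) b + c (g, h) b)
        = ∑ j : H, (c (h, j) (g⁻¹ • b) + c (g, h * j) b) :=
      Finset.sum_congr rfl (fun j _ => hc g h j b)
    rw [Finset.sum_add_distrib, Finset.sum_add_distrib] at h1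
    have h2 : ∑ j : H, c (g, h * j) b = B g b := by
      rw [hB]
      exact Fintype.sum_equiv (Equiv.mulLeft h) _ _ (fun j => rfl)
    have h3 : ∑ j : H, c (g, h) b = N * c (g, h) b := by
      simp [hNdef, mul_comm]
    rw [h2, h3] at h1
    rw [hB]
    simp only at h1 ⊢
    linarith
  have hBkeyQ : ∀ g h : H, ∀ b : β,
      ((B h (g⁻¹ • b) : ℚ)) - B (g * h) b + B g b = (N : ℚ) * c (g, h) b := by
    intro g h b; exact_mod_cast hBkey g h b
  have hD : ∀ g h : H, ∀ b : β, (B h (g⁻¹ • b) : ℚ)/N - (B (g*h) b : ℚ)/N + (B g b : ℚ)/N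
      = ((c (g,h) b : ℤ) : ℚ) := by
    intro g h b
    have h1 : (B h (g⁻¹ • b) : ℚ)/N - (B (g*h) b : ℚ)/N + (B g b : ℚ)/N
        = ((B h (g⁻¹ • b) : ℚ) - B (g*h) b + B g b)/N := by ring
    rw [h1, hBkeyQ g h b, mul_div_cancel_left₀ _ hN0']
  set f : H → β → AddCircle (1 : ℚ) := fun g b => (((B g b : ℚ) / N : ℚ) : AddCircle (1:ℚ))
    with hf
  have intcast0 : ∀ m : ℤ, ((m : ℚ) : AddCircle (1:ℚ)) = 0 := by
    intro m; rw [AddCircle.coe_eq_zero_iff]; exact ⟨m, by simp⟩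
  have fcoc : ∀ g h : H, ∀ b : β, f (g * h) b = f g b + f h (g⁻¹ • b) := by
    intro g h b
    have key : ((B g b : ℚ) / N + (B h (g⁻¹ • b) : ℚ) / N) - (B (g * h) b : ℚ) / N
        = ((c (g, h) b : ℤ) : ℚ) := by
      linear_combination hD g h b
    have h5 : f g b + f h (g⁻¹ • b) - f (g * h) b
        = (((c (g, h) b : ℤ) : ℚ) : AddCircle (1:ℚ)) := by
      rw [hf]
      show ((((B g b : ℚ) / N + (B h (g⁻¹ • b) : ℚ) / N) - (B (g*h) b : ℚ) / N : ℚ)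
        : AddCircle (1:ℚ)) = _
      rw [key]
    rw [intcast0] at h5
    exact (sub_eq_zero.1 h5).symm
  have hstab : ∀ (g : H) (b : β), g • b = b → f g b = 0 := by
    intro g b hgb
    obtain ⟨uu, huu⟩ := hres g
    set φ : Subgroup.zpowers g → β → ℚ := fun s b => (B (s : H) b : ℚ) / N - (uu s b : ℚ) with hφ
    have φcoc : ∀ s t : Subgroup.zpowers g, ∀ b : β, φ (s * t) b = φ t (s⁻¹ • b) + φ s b := by
      intro s t b
      have hsm : s⁻¹ • b = (s : H)⁻¹ • b := by simp [Subgroup.smul_def]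
      rw [hsm]
      have h7 := huu s t b
      have h7' := congrArg (fun n : ℤ => (n : ℚ)) h7
      push_cast at h7'
      have h6 := hD (s : H) (t : H) b
      show (B ((s : H) * (t : H)) b : ℚ) / N - (uu (s * t) b : ℚ)
          = ((B (t : H) ((s : H)⁻¹ • b) : ℚ) / N - (uu t ((s:H)⁻¹ • b) : ℚ))
            + ((B (s : H) b : ℚ) / N - (uu s b : ℚ))
      have h8 : ((s : H) * (t : H)) = ((s * t : Subgroup.zpowers g) : H) := rfl
      rw [h8]
      linear_combination -h6 - h7'
    obtain ⟨w, hw⟩ := perm_h1_rat (H := Subgroup.zpowers g) φ φcoc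
    set gg : Subgroup.zpowers g := ⟨g, Subgroup.mem_zpowers g⟩ with hgg
    have hw2 := hw gg b
    have hsm : gg⁻¹ • b = b := by
      have h9 : (g⁻¹ : H) • b = b := by
        conv_lhs => rw [← hgb]
        rw [inv_smul_smul]
      simpa [Subgroup.smul_def] using h9
    rw [hsm, sub_self] at hw2
    have h8 : (B g b : ℚ) / N = (uu gg b : ℚ) := by
      have h10 : φ gg b = 0 := hw2
      rw [hφ] at h10
      simp only at h10
      linarith
    show (((B g b : ℚ) / N : ℚ) : AddCircle (1:ℚ)) = 0
    rw [h8]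
    exact intcast0 _
  obtain ⟨v, hv⟩ := shapiro_inj f (fun g h b => by rw [fcoc g h b]) hstab
  have hlift : ∀ b : β, ∃ q : ℚ, (q : AddCircle (1:ℚ)) = v b := fun b => Quotient.exists_rep _
  choose vt hvt using hlift
  have hint : ∀ (g : H) (b : β), ∃ m : ℤ,
      (B g b : ℚ) / N - (vt (g⁻¹ • b) - vt b) = (m : ℚ) := by
    intro g b
    have h9 : (((B g b : ℚ) / N - (vt (g⁻¹ • b) - vt b) : ℚ) : AddCircle (1:ℚ)) = 0 := by
      have h10 : (((B g b : ℚ) / N - (vt (g⁻¹ • b) - vt b) : ℚ) : AddCircle (1:ℚ))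
          = f g b - (v (g⁻¹ • b) - v b) := by
        show (((B g b : ℚ) / N : ℚ) : AddCircle (1:ℚ))
            - (((vt (g⁻¹ • b) - vt b : ℚ)) : AddCircle (1:ℚ)) = _
        have h11 : (((vt (g⁻¹ • b) - vt b : ℚ)) : AddCircle (1:ℚ))
            = v (g⁻¹ • b) - v b := by
          show ((vt (g⁻¹ • b) : ℚ) : AddCircle (1:ℚ)) - ((vt b : ℚ) : AddCircle (1:ℚ)) = _
          rw [hvt, hvt]
        rw [h11]
      rw [h10, hv g b, sub_self]
    rw [AddCircle.coe_eq_zero_iff] at h9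
    obtain ⟨m, hm⟩ := h9
    exact ⟨m, by simpa using hm.symm⟩
  choose m hm using hint
  refine ⟨fun g => Finsupp.equivFunOnFinite.symm (m g), fun g h b => ?_⟩
  have happ : ∀ (g : H) (b : β), (Finsupp.equivFunOnFinite.symm (m g) : β →₀ ℤ) b = m g b :=
    fun g b => rfl
  rw [happ, happ, happ]
  have castinj : Function.Injective (fun n : ℤ => (n : ℚ)) := fun a b h => by simpa using h
  apply castinj
  show ((c (g, h) b : ℤ) : ℚ) = ((m h (g⁻¹ • b) - m (g * h) b + m g b : ℤ) : ℚ)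
  push_cast
  have e1 := hm h (g⁻¹ • b)
  have e2 := hm (g * h) b
  have e3 := hm g b
  have e4 : (g * h)⁻¹ • b = h⁻¹ • (g⁻¹ • b) := by rw [mul_inv_rev, mul_smul]
  rw [e4] at e2
  linear_combination -(hD g h b) + e1 - e2 + e3

end PermVanish

section Glue

variable {β : Type} {H : Type} [Group H] [MulAction H β]
variable {VM VQ : Type} [AddCommGroup VM] [AddCommGroup VQ]

/-- The coboundary operator on `P`-valued 1-cochains. -/
noncomputable def TT (F : H → β →₀ ℤ) (g h : H) : β →₀ ℤ :=
  permRep H β g (F h) - F (g * h) + F g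

lemma TT_identity (F : H → β →₀ ℤ) (g h j : H) :
    TT F (g * h) j + TT F g h
      = permRep H β g (TT F h j) + TT F g (h * j) := by
  have hmul : ∀ (a b : H) (x : β →₀ ℤ),
      permRep H β a (permRep H β b x)
        = permRep H β (a * b) x := by
    intro a b x
    rw [map_mul]
    rfl
  simp only [TT, map_add, map_sub, hmul, mul_assoc]
  abel

lemma TT_dzero (w : β →₀ ℤ) (g h : H) :
    TT (fun a => permRep H β a w - w) g h = 0 := by
  have hmul : ∀ (a b : H) (x : β →₀ ℤ),
      permRep H β a (permRep H β b x)
        = permRep H β (a * b) x := by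
    intro a b x
    rw [map_mul]
    rfl
  simp only [TT, map_sub, hmul]
  abel

lemma TT_add (F F' : H → β →₀ ℤ) (g h : H) :
    TT (F + F') g h = TT F g h + TT F' g h := by
  simp only [TT, Pi.add_apply, map_add]
  abel

lemma TT_smul (n : ℤ) (F : H → β →₀ ℤ) (g h : H) :
    TT (n • F) g h = n • TT F g h := by
  simp only [TT, Pi.smul_apply, map_smul, smul_add, smul_sub]

lemma TT_sub (F F' : H → β →₀ ℤ) (g h : H) :
    TT (F - F') g h = TT F g h - TT F' g h := by
  simp only [TT, Pi.sub_apply, map_sub]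
  abel

lemma p_TT {p : (β →₀ ℤ) →ₗ[ℤ] VQ} {ρQH : Representation ℤ H VQ}
    (hpH : ∀ (g : H) (x : β →₀ ℤ),
      p (permRep H β g x) = ρQH g (p x))
    {f : H → VQ} (hf : ∀ g h, f (g * h) = ρQH g (f h) + f g)
    {F : H → β →₀ ℤ} (hF : ∀ g, p (F g) = f g) (g h : H) : p (TT F g h) = 0 := by
  simp only [TT, map_add, map_sub, hpH, hF]
  rw [hf g h]
  abel

variable (i : VM →ₗ[ℤ] (β →₀ ℤ)) {p : (β →₀ ℤ) →ₗ[ℤ] VQ}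

/-- Choice-based retraction of `i`. -/
noncomputable def jj (y : β →₀ ℤ) : VM := Function.invFun i y

lemma i_jj (hinj : Function.Injective i) (hexact : LinearMap.range i = LinearMap.ker p)
    {y : β →₀ ℤ} (hy : p y = 0) : i (jj i y) = y := by
  have : y ∈ LinearMap.range i := by rw [hexact]; exact LinearMap.mem_ker.2 hy
  obtain ⟨x, hx⟩ := this
  exact Function.invFun_eq ⟨x, hx⟩

/-- The connecting cocycle associated to a lift `F`. -/
noncomputable def dlt (F : H → β →₀ ℤ) : H × H → VM :=
  fun gh => jj i (TT F gh.1 gh.2)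

lemma i_dlt (hinj : Function.Injective i) (hexact : LinearMap.range i = LinearMap.ker p)
    {F : H → β →₀ ℤ} (hT0 : ∀ g h, p (TT F g h) = 0) (g h : H) :
    i (dlt i F (g, h)) = TT F g h :=
  i_jj i hinj hexact (hT0 g h)

lemma dlt_identity {ρMH : Representation ℤ H VM}
    (hiH : ∀ (g : H) (x : VM),
      i (ρMH g x) = permRep H β g (i x))
    (hinj : Function.Injective i) (hexact : LinearMap.range i = LinearMap.ker p)
    {F : H → β →₀ ℤ} (hT0 : ∀ g h, p (TT F g h) = 0) (g h j : H) :
    dlt i F (g * h, j) + dlt i F (g, h)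
      = ρMH g (dlt i F (h, j)) + dlt i F (g, h * j) := by
  apply hinj
  rw [map_add, map_add, hiH, i_dlt i hinj hexact hT0, i_dlt i hinj hexact hT0,
    i_dlt i hinj hexact hT0, i_dlt i hinj hexact hT0]
  exact TT_identity F g h j

/-- If `i ∘ c' = TT U` and `F, U` have the same image under `p`, then `dlt i F - c'` is a
coboundary. -/
lemma dlt_sub_coboundary {ρMH : Representation ℤ H VM}
    (hiH : ∀ (g : H) (x : VM),
      i (ρMH g x) = permRep H β g (i x))
    (hinj : Function.Injective i) (hexact : LinearMap.range i = LinearMap.ker p)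
    {F U : H → β →₀ ℤ} (hFU : ∀ g, p (F g) = p (U g))
    (hT0 : ∀ g h, p (TT F g h) = 0)
    {c' : H × H → VM} (hc' : ∀ g h, i (c' (g, h)) = TT U g h) :
    ∃ xx : H → VM, ∀ g h,
      ρMH g (xx h) - xx (g * h) + xx g = dlt i F (g, h) - c' (g, h) := by
  refine ⟨fun g => jj i (F g - U g), fun g h => ?_⟩
  have hker : ∀ g : H, p (F g - U g) = 0 := by
    intro g; rw [map_sub, hFU g, sub_self]
  apply hinj
  simp only [map_add, map_sub, hiH, i_jj i hinj hexact (hker h),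
    i_jj i hinj hexact (hker (g * h)), i_jj i hinj hexact (hker g),
    i_dlt i hinj hexact hT0 g h, hc' g h]
  simp only [TT, map_sub]
  abel

lemma cocycle_of_TT_zero {F : H → β →₀ ℤ} (h0 : ∀ g h : H, TT F g h = 0) :
    ∀ (g h : H) (b : β), F (g * h) b = F h (g⁻¹ • b) + F g b := by
  intro g h b
  have h1 := congrArg (fun w : β →₀ ℤ => w b) (h0 g h)
  simp only [TT, Finsupp.add_apply, Finsupp.sub_apply, permRep_apply,
    Finsupp.coe_zero, Pi.zero_apply] at h1
  linarith

lemma F_eq_dz {F : H → β →₀ ℤ} (z : β →₀ ℤ)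
    (h : ∀ (g : H) (b : β), F g b = z (g⁻¹ • b) - z b) (g : H) :
    F g = permRep H β g z - z := by
  ext b
  rw [Finsupp.sub_apply, permRep_apply]
  exact h g b

lemma ofMulAction_res {G : Type} [Group G] {β : Type} [MulAction G β] {S : Subgroup G}
    (s : S) (y : β →₀ ℤ) :
    permRep S β s y = permRep G β (s : G) y := by
  ext b
  rw [permRep_apply, permRep_apply]
  congr 1

lemma TT_res {G : Type} [Group G] {β : Type} [MulAction G β] {S : Subgroup G}
    (F : G → β →₀ ℤ) (s t : S) :
    TT (fun a : S => F (a : G)) s t = TT F (s : G) (t : G) := by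
  simp only [TT, ofMulAction_res]
  rfl

end Glue
set_option maxHeartbeats 2000000 in
/-- Let `G` be a finite group and `0 → M → P → Q → 0` an exact sequence of finitely
generated `G`-modules with `P` a permutation module (free `ℤ`-module on a basis `β`
permuted by `G`). Then `Ш¹_ω(G, Q) ≅ Ш²_ω(G, M)` via the connecting homomorphism. -/
theorem sha1_iso_sha2_of_permutation_extension
    (G : Type) [Group G] [Finite G]
    (β : Type) [Fintype β] [MulAction G β]
    (VM VQ : Type) [AddCommGroup VM] [AddCommGroup VQ]
    [Module.Finite ℤ VM] [Module.Finite ℤ VQ]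
    (ρM : Representation ℤ G VM) (ρQ : Representation ℤ G VQ)
    (i : VM →ₗ[ℤ] (β →₀ ℤ)) (p : (β →₀ ℤ) →ₗ[ℤ] VQ)
    (hi : ∀ (g : G) (x : VM),
      i (ρM g x) = Finsupp.lmapDomain ℤ ℤ (g • ·) (i x))
    (hp : ∀ (g : G) (x : β →₀ ℤ),
      p (Finsupp.lmapDomain ℤ ℤ (g • ·) x) = ρQ g (p x))
    (hinj : Function.Injective i) (hsurj : Function.Surjective p)
    (hexact : LinearMap.range i = LinearMap.ker p) :
    Nonempty (Sha1 (Rep.of ρQ) ≃ₗ[ℤ] Sha2 (Rep.of ρM)) := by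
  classical
  replace hi : ∀ (g : G) (x : VM), i (ρM g x) = permRep G β g (i x) := hi
  replace hp : ∀ (g : G) (x : β →₀ ℤ), p (permRep G β g x) = ρQ g (p x) := hp
  -- Notation
  have pi0 : ∀ x : VM, p (i x) = 0 := by
    intro x
    have hmem : i x ∈ LinearMap.ker p := hexact ▸ LinearMap.mem_range_self i x
    exact LinearMap.mem_ker.1 hmem
  set σ : VQ → (β →₀ ℤ) := Function.surjInv hsurj with hσ
  have hσp : ∀ q : VQ, p (σ q) = q := fun q => Function.surjInv_eq hsurj q
  set Fof : cocycles₁ (Rep.of ρQ) → (G → β →₀ ℤ) := fun f g => σ (f.1 g) with hFof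
  have hT0 : ∀ f : cocycles₁ (Rep.of ρQ), ∀ g h : G, p (TT (Fof f) g h) = 0 := by
    intro f g h
    refine p_TT (ρQH := ρQ) hp (f := fun g => (f.1 g : VQ)) ?_ (fun g => hσp (f.1 g)) g h
    intro a b
    exact (mem_cocycles₁_iff (A := Rep.of ρQ) f.1).1 f.2 a b
  have memTwo : ∀ f : cocycles₁ (Rep.of ρQ),
      dlt i (Fof f) ∈ cocycles₂ (Rep.of ρM) := by
    intro f
    rw [mem_cocycles₂_iff]
    intro g h j
    exact dlt_identity i hi hinj hexact (hT0 f) g h j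
  -- the workhorse: the class of `dlt i (Fof f)` equals that of any 2-cocycle `c'`
  -- admitting a lift `U` of `f`
  have workhorse : ∀ (f : cocycles₁ (Rep.of ρQ)) (c' : cocycles₂ (Rep.of ρM))
      (U : G → β →₀ ℤ), (∀ g : G, p (U g) = f.1 g) →
      (∀ g h : G, i (c'.1 (g, h)) = TT U g h) →
      (Submodule.Quotient.mk ⟨dlt i (Fof f), memTwo f⟩ :
        oldH2 (Rep.of ρM)) = Submodule.Quotient.mk c' := by
    intro f c' U hU hc'
    rw [Submodule.Quotient.eq]
    rw [mem_twoCoboundaries_iff]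
    obtain ⟨xx, hxx⟩ := dlt_sub_coboundary i (ρMH := ρM) hi hinj hexact
      (F := Fof f) (U := U) (fun g => by rw [hσp, hU]) (hT0 f) hc'
    exact ⟨xx, fun g h => hxx g h⟩
  -- the connecting homomorphism on cocycles
  set δlin : cocycles₁ (Rep.of ρQ) →ₗ[ℤ] oldH2 (Rep.of ρM) :=
    { toFun := fun f => Submodule.Quotient.mk ⟨dlt i (Fof f), memTwo f⟩
      map_add' := by
        intro f f'
        rw [← Submodule.Quotient.mk_add]
        refine workhorse (f + f') (⟨dlt i (Fof f), memTwo f⟩ + ⟨dlt i (Fof f'), memTwo f'⟩)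
          (fun g => Fof f g + Fof f' g) (fun g => ?_) (fun g h => ?_)
        · show p (σ (f.1 g) + σ (f'.1 g)) = _
          rw [map_add, hσp, hσp]
          rfl
        · show i (dlt i (Fof f) (g, h) + dlt i (Fof f') (g, h)) = _
          rw [map_add, i_dlt i hinj hexact (hT0 f) g h, i_dlt i hinj hexact (hT0 f') g h]
          exact (TT_add (Fof f) (Fof f') g h).symm
      map_smul' := by
        intro n f
        simp only [RingHom.id_apply]
        rw [← Submodule.Quotient.mk_smul]
        refine workhorse (n • f) (n • ⟨dlt i (Fof f), memTwo f⟩)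
          (fun g => n • Fof f g) (fun g => ?_) (fun g h => ?_)
        · show p (n • σ (f.1 g)) = _
          rw [map_smul, hσp]
          rfl
        · show i (n • dlt i (Fof f) (g, h)) = _
          rw [map_smul, i_dlt i hinj hexact (hT0 f) g h]
          exact (TT_smul n (Fof f) g h).symm } with hδlin
  -- coboundaries die
  have hcob : oneCoboundaries (Rep.of ρQ) ≤ LinearMap.ker δlin := by
    intro f hf
    rw [LinearMap.mem_ker]
    rw [mem_oneCoboundaries_iff] at hf
    obtain ⟨x, hx⟩ := hf
    show Submodule.Quotient.mk ⟨dlt i (Fof f), memTwo f⟩ = (0 : oldH2 (Rep.of ρM))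
    have h0 : (Submodule.Quotient.mk (0 : cocycles₂ (Rep.of ρM)) :
        oldH2 (Rep.of ρM)) = 0 := Submodule.Quotient.mk_zero _
    rw [← h0]
    refine workhorse f 0
      (fun g => permRep G β g (σ x) - σ x) (fun g => ?_) (fun g h => ?_)
    · rw [map_sub, hp, hσp]
      exact hx g
    · show i (((0 : G × G → VM)) (g, h)) = _
      rw [TT_dzero (σ x) g h]
      simp
  set δH : oldH1 (Rep.of ρQ) →ₗ[ℤ] oldH2 (Rep.of ρM) :=
    Submodule.liftQ (oneCoboundaries (Rep.of ρQ)) δlin hcob with hδH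
  -- injectivity of δH
  have injH : ∀ y : oldH1 (Rep.of ρQ), δH y = 0 → y = 0 := by
    intro y hy
    obtain ⟨f, rfl⟩ := Submodule.Quotient.mk_surjective _ y
    rw [hδH, Submodule.liftQ_apply] at hy
    have hy' : (Submodule.Quotient.mk ⟨dlt i (Fof f), memTwo f⟩ :
        oldH2 (Rep.of ρM)) = 0 := hy
    rw [Submodule.Quotient.mk_eq_zero, mem_twoCoboundaries_iff] at hy'
    obtain ⟨xx, hxx0⟩ := hy'
    have hTT' : ∀ g h : G, TT (fun g => Fof f g - i (xx g)) g h = 0 := by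
      intro g h
      have h1 : TT (fun g => Fof f g - i (xx g)) g h
          = TT (Fof f) g h - TT (fun g => i (xx g)) g h := TT_sub _ _ g h
      have h2 : TT (fun g => i (xx g)) g h = i (dlt i (Fof f) (g, h)) := by
        show permRep G β g (i (xx h)) - i (xx (g * h)) + i (xx g) = _
        rw [← hi, ← map_sub, ← map_add]
        exact congrArg (fun v => i v) (hxx0 g h)
      rw [h1, h2, i_dlt i hinj hexact (hT0 f) g h, sub_self]
    obtain ⟨z, hz⟩ := perm_h1 (fun g => Fof f g - i (xx g)) (cocycle_of_TT_zero hTT')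
    rw [Submodule.Quotient.mk_eq_zero, mem_oneCoboundaries_iff]
    refine ⟨p z, fun g => ?_⟩
    have h3 := F_eq_dz (H := G) z hz g
    have h4 : p (Fof f g - i (xx g)) = (f.1 g : VQ) := by
      rw [map_sub, pi0, sub_zero]
      exact hσp (f.1 g)
    show ρQ g (p z) - p z = (f.1 g : VQ)
    calc ρQ g (p z) - p z = p (permRep G β g z - z) := by
          rw [map_sub, hp]
      _ = p (Fof f g - i (xx g)) := by rw [← h3]
      _ = (f.1 g : VQ) := h4
  -- δH maps Sha1 into Sha2
  have hSha : ∀ y ∈ Sha1 (Rep.of ρQ), δH y ∈ Sha2 (Rep.of ρM) := by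
    intro y hy
    obtain ⟨f, rfl⟩ := Submodule.Quotient.mk_surjective _ y
    rw [hδH, Submodule.liftQ_apply]
    show (Submodule.Quotient.mk ⟨dlt i (Fof f), memTwo f⟩ :
        oldH2 (Rep.of ρM)) ∈ ⨅ g : G, LinearMap.ker
          (resH2 (Subgroup.zpowers g).subtype (Rep.of ρM))
    rw [Submodule.mem_iInf]
    intro g
    rw [LinearMap.mem_ker, resH2, Submodule.mapQ_apply, Submodule.Quotient.mk_eq_zero,
      mem_twoCoboundaries_iff]
    -- the hypothesis on f restricted to the cyclic subgroup
    have hy' := (Submodule.mem_iInf _).1 hy g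
    rw [LinearMap.mem_ker, resH1, Submodule.mapQ_apply, Submodule.Quotient.mk_eq_zero,
      mem_oneCoboundaries_iff] at hy'
    obtain ⟨x, hx⟩ := hy'
    -- work over the cyclic subgroup C
    have hdc := dlt_sub_coboundary (H := Subgroup.zpowers g) i
      (ρMH := ρM.comp (Subgroup.zpowers g).subtype)
      (fun s v => by rw [MonoidHom.comp_apply, ofMulAction_res]; exact hi (s : G) v)
      hinj hexact
      (F := fun a : Subgroup.zpowers g => Fof f (a : G))
      (U := fun a : Subgroup.zpowers g =>
        permRep (Subgroup.zpowers g) β a (σ x) - σ x)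
      (fun s => by
        show p (σ ((f.1 ((s : G)) : VQ)))
          = p (permRep (Subgroup.zpowers g) β s (σ x) - σ x)
        rw [map_sub, ofMulAction_res, hp, hσp, hσp x]
        exact (hx s).symm)
      (fun s t => by rw [TT_res]; exact hT0 f (s : G) (t : G))
      (c' := fun _ => 0)
      (fun s t => by rw [map_zero, TT_dzero])
    obtain ⟨xx, hxx⟩ := hdc
    refine ⟨xx, fun s t => ?_⟩
    have h5 := hxx s t
    rw [sub_zero] at h5
    have hdr : dlt i (fun a : Subgroup.zpowers g => Fof f (a : G)) (s, t)
        = dlt i (Fof f) ((s : G), (t : G)) := by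
      show jj i (TT (fun a : Subgroup.zpowers g => Fof f (a : G)) s t) = _
      rw [TT_res]
      rfl
    rw [hdr] at h5
    exact h5
  -- surjectivity of δH onto Sha2
  have surjSha : ∀ z ∈ Sha2 (Rep.of ρM), ∃ y ∈ Sha1 (Rep.of ρQ), δH y = z := by
    intro z hz
    obtain ⟨c, rfl⟩ := Submodule.Quotient.mk_surjective _ z
    set cv : G × G → VM := fun gh => c.1 gh with hcv
    -- restriction data for each g
    have hz' : ∀ g : G, ∃ xx : Subgroup.zpowers g → VM, ∀ s t : Subgroup.zpowers g,
        ρM (s : G) (xx t) - xx (s * t) + xx s = cv ((s : G), (t : G)) := by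
      intro g
      have h6 := (Submodule.mem_iInf _).1 hz g
      rw [LinearMap.mem_ker, resH2, Submodule.mapQ_apply, Submodule.Quotient.mk_eq_zero,
        mem_twoCoboundaries_iff] at h6
      obtain ⟨xx, hxx⟩ := h6
      exact ⟨fun s => xx s, fun s t => hxx s t⟩
    -- apply the vanishing of Ш²(G, P)
    have hcP : ∀ g h j : G, ∀ b : β,
        i (cv (g * h, j)) b + i (cv (g, h)) b
          = i (cv (h, j)) (g⁻¹ • b) + i (cv (g, h * j)) b := by
      intro g h j b
      have hco : cv (g * h, j) + cv (g, h) = ρM g (cv (h, j)) + cv (g, h * j) :=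
        (mem_cocycles₂_iff (A := Rep.of ρM) c.1).1 c.2 g h j
      have h7 := congrArg (fun v => i v) hco
      simp only [map_add] at h7
      rw [hi] at h7
      have h8 := congrArg (fun w : β →₀ ℤ => w b) h7
      simpa [Finsupp.add_apply, permRep_apply] using h8
    have hresP : ∀ g : G, ∃ u : Subgroup.zpowers g → (β →₀ ℤ),
        ∀ s t : Subgroup.zpowers g, ∀ b : β,
          i (cv ((s : G), (t : G))) b = u t ((s : G)⁻¹ • b) - u (s * t) b + u s b := by
      intro g
      obtain ⟨xx, hxx⟩ := hz' g
      refine ⟨fun s => i (xx s), fun s t b => ?_⟩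
      have h9 := congrArg (fun v => i v) (hxx s t).symm
      simp only [map_add, map_sub] at h9
      rw [hi] at h9
      have h10 := congrArg (fun w : β →₀ ℤ => w b) h9
      simpa [Finsupp.add_apply, Finsupp.sub_apply, permRep_apply] using h10
    obtain ⟨U, hU⟩ := perm_sha2 (H := G) (fun gh => i (cv gh)) hcP hresP
    have hiU : ∀ g h : G, i (cv (g, h)) = TT U g h := by
      intro g h
      ext b
      rw [hU g h b]
      simp only [TT, Finsupp.add_apply, Finsupp.sub_apply, permRep_apply]
    -- the 1-cocycle f := p ∘ U
    have hfcoc : (fun g : G => p (U g)) ∈ cocycles₁ (Rep.of ρQ) := by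
      rw [mem_cocycles₁_iff]
      intro g h
      have h0 : p (TT U g h) = 0 := by rw [← hiU]; exact pi0 _
      simp only [TT, map_add, map_sub] at h0
      rw [hp] at h0
      show p (U (g * h)) = ρQ g (p (U h)) + p (U g)
      have h11 : p (U (g * h)) - (ρQ g (p (U h)) + p (U g))
          = -(ρQ g (p (U h)) - p (U (g * h)) + p (U g)) := by abel
      have h12 : p (U (g * h)) - (ρQ g (p (U h)) + p (U g)) = 0 := by rw [h11, h0, neg_zero]
      exact sub_eq_zero.1 h12
    have hdelta : δlin ⟨fun g : G => p (U g), hfcoc⟩ = Submodule.Quotient.mk c :=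
      workhorse ⟨fun g : G => p (U g), hfcoc⟩ c U (fun g => rfl) hiU
    -- membership in Sha1
    have hmem : (Submodule.Quotient.mk ⟨fun g : G => p (U g), hfcoc⟩ :
        oldH1 (Rep.of ρQ)) ∈ Sha1 (Rep.of ρQ) := by
      show (Submodule.Quotient.mk ⟨fun g : G => p (U g), hfcoc⟩ :
          oldH1 (Rep.of ρQ)) ∈ ⨅ g : G, LinearMap.ker
            (resH1 (Subgroup.zpowers g).subtype (Rep.of ρQ))
      rw [Submodule.mem_iInf]
      intro g
      rw [LinearMap.mem_ker, resH1, Submodule.mapQ_apply, Submodule.Quotient.mk_eq_zero,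
        mem_oneCoboundaries_iff]
      obtain ⟨xx, hxx⟩ := hz' g
      -- F'' is a C-cocycle with values in the permutation module
      have hTF : ∀ s t : Subgroup.zpowers g,
          TT (fun a : Subgroup.zpowers g => U (a : G) - i (xx a)) s t = 0 := by
        intro s t
        have h13 : TT (fun a : Subgroup.zpowers g => U (a : G) - i (xx a)) s t
            = TT (fun a : Subgroup.zpowers g => U (a : G)) s t
              - TT (fun a : Subgroup.zpowers g => i (xx a)) s t := TT_sub _ _ s t
        have h14 : TT (fun a : Subgroup.zpowers g => U (a : G)) s t
            = TT U (s : G) (t : G) := TT_res U s t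
        have h15 : TT (fun a : Subgroup.zpowers g => i (xx a)) s t
            = i (cv ((s : G), (t : G))) := by
          show permRep (Subgroup.zpowers g) β s (i (xx t))
            - i (xx (s * t)) + i (xx s) = _
          rw [ofMulAction_res, ← hi, ← map_sub, ← map_add, hxx s t]
        rw [h13, h14, h15, hiU, sub_self]
      obtain ⟨zc, hzc⟩ := perm_h1 (H := Subgroup.zpowers g)
        (fun a : Subgroup.zpowers g => U (a : G) - i (xx a)) (cocycle_of_TT_zero hTF)
      refine ⟨p zc, fun s => ?_⟩
      have h16 := F_eq_dz (H := Subgroup.zpowers g) zc hzc s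
      have h17 : p (U (s : G) - i (xx s)) = p (U (s : G)) := by
        rw [map_sub, pi0, sub_zero]
      show ρQ (s : G) (p zc) - p zc = p (U ((s : G)))
      calc ρQ (s : G) (p zc) - p zc
          = p (permRep (Subgroup.zpowers g) β s zc - zc) := by
            rw [map_sub, ofMulAction_res, hp]
        _ = p (U (s : G) - i (xx s)) := by rw [← h16]
        _ = p (U ((s : G))) := h17
    refine ⟨Submodule.Quotient.mk ⟨fun g : G => p (U g), hfcoc⟩, hmem, ?_⟩
    rw [hδH, Submodule.liftQ_apply]
    exact hdelta
  -- assemble the equivalence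
  have hker : ∀ y, δH y = 0 → y = 0 := injH
  set Δ : Sha1 (Rep.of ρQ) →ₗ[ℤ] Sha2 (Rep.of ρM) := δH.restrict hSha with hΔ
  have hinjΔ : Function.Injective Δ := by
    intro a b hab
    apply Subtype.ext
    have h18 : δH a.1 = δH b.1 := congrArg Subtype.val hab
    by_contra hne
    have := sub_ne_zero.2 hne
    apply this
    apply hker
    rw [map_sub, h18, sub_self]
  have hsurjΔ : Function.Surjective Δ := by
    intro w
    obtain ⟨y, hy, hδ⟩ := surjSha w.1 w.2
    refine ⟨⟨y, hy⟩, Subtype.ext ?_⟩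
    show δH y = (w : oldH2 (Rep.of ρM))
    exact hδ
  exact ⟨LinearEquiv.ofBijective Δ ⟨hinjΔ, hsurjΔ⟩⟩
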